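/- arXiv:2110.11063 — 4 statements merged into one kernel-verified Lean document; each statement's English description precedes it below -/
import Mathlib

section
/- Let Ω ⊂ ℝ^n be bounded open and Ψ ∈ B_0(H^s, H^{-s}). Then the bilinear form B_Ψ(v,w) = ⟨(−Δ)^{s/2}v, (−Δ)^{s/2}w⟩ + ⟨Ψv, w⟩ is coercive on H̃^s(Ω): there exist constants c_0 > 0 and c_1 > 0 such that B_Ψ(v,v) ≥ c_0‖v‖²_{H^s} − c_1‖v‖²_{L^2} for all v ∈ H̃^s(Ω). -/
/-- For `Ψ ∈ B₀(Hˢ,H⁻ˢ)` the bilinear form `B_Ψ` is coercive on `H̃ˢ(Ω)`: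
`B_Ψ(v,v) ≥ c₀‖v‖²_{Hˢ} − c₁‖v‖²_{L²}`. -/
theorem stmt_6 (n : ℕ) (s : ℝ) (hs : s ∈ Set.Ioo (0:ℝ) 1)
    {Hs L2 Hms : Type*}
    [NormedAddCommGroup Hs] [NormedSpace ℝ Hs]
    [NormedAddCommGroup L2] [InnerProductSpace ℝ L2]
    [NormedAddCommGroup Hms] [NormedSpace ℝ Hms]
    (Ω : Set (EuclideanSpace ℝ (Fin n))) (hΩo : IsOpen Ω) (hΩb : Bornology.IsBounded Ω)
    -- Λ models (−Δ)^{s/2} : Hˢ → L²; i is the inclusion Hˢ ⊂ L²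
    (Λ : Hs →ₗ[ℝ] L2) (i : Hs →ₗ[ℝ] L2)
    (pair : Hms →ₗ[ℝ] Hs →ₗ[ℝ] ℝ)
    (hpair : ∀ (w : Hms) (v : Hs), |pair w v| ≤ ‖w‖ * ‖v‖)
    -- H̃ˢ(Ω)
    (tildeΩ : Set Hs)
    -- fractional Poincaré inequality
    (cΩ : ℝ) (hcΩ : 0 < cΩ)
    (hPoincare : ∀ v ∈ tildeΩ, cΩ * ‖v‖ ^ 2 ≤ ‖Λ v‖ ^ 2 + ‖i v‖ ^ 2)
    (Ψ : Hs →L[ℝ] Hms)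
    -- Ψ ∈ B₀(Hˢ,H⁻ˢ): for every ε > 0, Ψ = Ψ₁ + Ψ₂ with Ψ₁ ∈ B(L²,L²), ‖Ψ₂‖ < ε
    (hB0 : ∀ ε > (0:ℝ), ∃ (Ψ₁ : L2 →L[ℝ] L2) (Ψ₂ : Hs →L[ℝ] Hms),
      (∀ v w : Hs, pair (Ψ v) w = (inner ℝ (Ψ₁ (i v)) (i w) : ℝ) + pair (Ψ₂ v) w) ∧
        ‖Ψ₂‖ < ε) :
    ∃ c₀ > (0:ℝ), ∃ c₁ > (0:ℝ), ∀ v ∈ tildeΩ,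
      c₀ * ‖v‖ ^ 2 - c₁ * ‖i v‖ ^ 2 ≤ (inner ℝ (Λ v) (Λ v) : ℝ) + pair (Ψ v) v := by
  obtain ⟨Ψ₁, Ψ₂, hsplit, hΨ₂⟩ := hB0 (cΩ / 2) (by linarith)
  refine ⟨cΩ / 2, by linarith, 1 + ‖Ψ₁‖, by positivity, fun v hv => ?_⟩
  have hΛ : (inner ℝ (Λ v) (Λ v) : ℝ) = ‖Λ v‖ ^ 2 := real_inner_self_eq_norm_sq _
  have hP := hPoincare v hv
  -- bound the Ψ₁ part
  have h1 : |(inner ℝ (Ψ₁ (i v)) (i v) : ℝ)| ≤ ‖Ψ₁‖ * ‖i v‖ ^ 2 := by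
    calc |(inner ℝ (Ψ₁ (i v)) (i v) : ℝ)| ≤ ‖Ψ₁ (i v)‖ * ‖i v‖ := abs_real_inner_le_norm _ _
      _ ≤ (‖Ψ₁‖ * ‖i v‖) * ‖i v‖ := by
          exact mul_le_mul_of_nonneg_right (Ψ₁.le_opNorm _) (norm_nonneg _)
      _ = ‖Ψ₁‖ * ‖i v‖ ^ 2 := by ring
  have h2 : |pair (Ψ₂ v) v| ≤ cΩ / 2 * ‖v‖ ^ 2 := by
    calc |pair (Ψ₂ v) v| ≤ ‖Ψ₂ v‖ * ‖v‖ := hpair _ _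
      _ ≤ (‖Ψ₂‖ * ‖v‖) * ‖v‖ := mul_le_mul_of_nonneg_right (Ψ₂.le_opNorm _) (norm_nonneg _)
      _ ≤ (cΩ / 2 * ‖v‖) * ‖v‖ := by
          have := mul_le_mul_of_nonneg_right hΨ₂.le (norm_nonneg v)
          exact mul_le_mul_of_nonneg_right this (norm_nonneg _)
      _ = cΩ / 2 * ‖v‖ ^ 2 := by ring
  rw [hsplit v v, hΛ]
  have e1 : -(‖Ψ₁‖ * ‖i v‖ ^ 2) ≤ (inner ℝ (Ψ₁ (i v)) (i v) : ℝ) := neg_le_of_abs_le h1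
  have e2 : -(cΩ / 2 * ‖v‖ ^ 2) ≤ pair (Ψ₂ v) v := neg_le_of_abs_le h2
  nlinarith [norm_nonneg (i v), sq_nonneg (‖i v‖)]
end

section
/- Let Ω, W ⊂ ℝ^n be non-empty open sets, s ∈ (0,1), and let Ψ ∈ B(H^s, H^{-s}) have finite propagation p(Ψ). Suppose u ∈ H̃^s(Ω) satisfies ((−Δ)^s u + Ψu)|_W = 0 and W ∩ N(Ω, p(Ψ))_e ≠ ∅. Then u ≡ 0. -/
/-- UCP for `(−Δ)ˢ + Ψ` with `Ψ` of finite propagation: if `u ∈ H̃ˢ(Ω)`,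
`((−Δ)ˢu + Ψu)|_W = 0` and `W ∩ N(Ω, p(Ψ))_e ≠ ∅`, then `u ≡ 0`. -/
theorem stmt_7 (n : ℕ) (s : ℝ) (hs : s ∈ Set.Ioo (0:ℝ) 1)
    {Hs Hms : Type*}
    [NormedAddCommGroup Hs] [NormedSpace ℝ Hs]
    [NormedAddCommGroup Hms] [NormedSpace ℝ Hms]
    (Ω W : Set (EuclideanSpace ℝ (Fin n)))
    (hΩo : IsOpen Ω) (hΩne : Ω.Nonempty) (hWo : IsOpen W) (hWne : W.Nonempty)
    (suppS : Hs → Set (EuclideanSpace ℝ (Fin n)))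
    (suppM : Hms → Set (EuclideanSpace ℝ (Fin n)))
    (hsupp0 : ∀ v : Hs, suppS v = ∅ → v = 0)
    (hsuppAdd : ∀ a b : Hms, suppM a ⊆ suppM (a + b) ∪ suppM b)
    -- (−Δ)ˢ : Hˢ → H⁻ˢ
    (fracLap : Hs →ₗ[ℝ] Hms)
    -- UCP for the fractional Laplacian: if u and (−Δ)ˢu both vanish on an open
    -- nonempty set V, then u ≡ 0
    (hUCP : ∀ (v : Hs) (V : Set (EuclideanSpace ℝ (Fin n))), IsOpen V → V.Nonempty →
      suppS v ⊆ Vᶜ → suppM (fracLap v) ⊆ Vᶜ → v = 0)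
    (Ψ : Hs →L[ℝ] Hms) (p : ℝ) (hp : 0 ≤ p)
    -- finite propagation p(Ψ) = p
    (hprop : ∀ u : Hs, suppM (Ψ u) ⊆ {x | Metric.infDist x (suppS u) ≤ p})
    (u : Hs) (hu : suppS u ⊆ closure Ω)
    -- ((−Δ)ˢ u + Ψ u)|_W = 0
    (hsol : suppM (fracLap u + Ψ u) ⊆ Wᶜ)
    -- W ∩ N(Ω, p(Ψ))_e ≠ ∅
    (hgeom : (W ∩ {x | Metric.infDist x Ω ≤ p}ᶜ).Nonempty) :
    u = 0 := by

  -- Case: empty support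
  by_cases hemp : suppS u = ∅
  · exact hsupp0 u hemp
  have hne : (suppS u).Nonempty := Set.nonempty_iff_ne_empty.mpr hemp
  set V : Set (EuclideanSpace ℝ (Fin n)) := W ∩ {x | Metric.infDist x Ω ≤ p}ᶜ with hV
  have hVo : IsOpen V := hWo.inter (isClosed_le (Metric.continuous_infDist_pt Ω) continuous_const).isOpen_compl
  -- suppS u ⊆ Vᶜ
  have hsub : ∀ x ∈ {x | Metric.infDist x Ω ≤ p}ᶜ, x ∉ suppS u ∧ Metric.infDist x (suppS u) > p := by
    intro x hx
    have hxd : ¬ Metric.infDist x Ω ≤ p := hx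
    have hle : Metric.infDist x Ω ≤ Metric.infDist x (suppS u) := by
      have h1 : Metric.infDist x (closure Ω) ≤ Metric.infDist x (suppS u) :=
        Metric.infDist_le_infDist_of_subset hu hne
      simpa [Metric.infDist_closure] using h1
    constructor
    · intro hxu
      exact hxd (hle.trans (by rw [Metric.infDist_zero_of_mem hxu]; exact hp))
    · exact lt_of_not_ge fun h => hxd (le_trans hle h)
  have hS : suppS u ⊆ Vᶜ := by
    intro x hx
    intro hxV
    exact (hsub x hxV.2).1 hx
  have hM : suppM (fracLap u) ⊆ Vᶜ := by
    intro x hx hxV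
    have := hsuppAdd (fracLap u) (Ψ u) hx
    rcases this with h | h
    · exact (hsol h) hxV.1
    · have hd : Metric.infDist x (suppS u) ≤ p := hprop u h
      exact absurd hd (not_le.mpr (hsub x hxV.2).2)
  exact hUCP u V hVo hgeom hS hM
end

section
/- (Alessandrini identity) Let Ω ⊂ ℝ^n be bounded open, s ∈ (0,1), and Ψ_1, Ψ_2 ∈ B_0(H^s,H^{-s}) with well-posed direct problems for Ψ_1, Ψ_2, Ψ_1*, Ψ_2*. Then for all f, g ∈ H^s(ℝ^n): ⟨(Λ_{Ψ_1} − Λ_{Ψ_2})[f], [g]⟩ = ⟨(Ψ_1 − Ψ_2) P_{Ψ_1} f, P_{Ψ_2*} g⟩. -/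
/-- Alessandrini identity:
`⟨(Λ_{Ψ₁} − Λ_{Ψ₂})[f], [g]⟩ = ⟨(Ψ₁ − Ψ₂) P_{Ψ₁} f, P_{Ψ₂*} g⟩`. -/
theorem stmt_9 (n : ℕ) (s : ℝ) (hs : s ∈ Set.Ioo (0:ℝ) 1)
    {Hs L2 Hms : Type*}
    [NormedAddCommGroup Hs] [NormedSpace ℝ Hs]
    [NormedAddCommGroup L2] [InnerProductSpace ℝ L2]
    [NormedAddCommGroup Hms] [NormedSpace ℝ Hms]
    (Ω : Set (EuclideanSpace ℝ (Fin n))) (hΩo : IsOpen Ω) (hΩb : Bornology.IsBounded Ω)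
    -- Λ models (−Δ)^{s/2} : Hˢ → L²; pair the H⁻ˢ–Hˢ duality pairing
    (Λ : Hs →ₗ[ℝ] L2)
    (pair : Hms →ₗ[ℝ] Hs →ₗ[ℝ] ℝ)
    -- H̃ˢ(Ω)
    (tildeΩ : Submodule ℝ Hs)
    (Ψ₁ Ψ₂ Ψ₁s Ψ₂s : Hs →L[ℝ] Hms)
    (hadj₁ : ∀ u v : Hs, pair (Ψ₁s u) v = pair (Ψ₁ v) u)
    (hadj₂ : ∀ u v : Hs, pair (Ψ₂s u) v = pair (Ψ₂ v) u)
    -- Poisson operators: P f − f ∈ H̃ˢ(Ω) and B_Ψ(P f, v) = 0 for all v ∈ H̃ˢ(Ω)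
    (P₁ P₂ P₁s P₂s : Hs → Hs)
    (hP₁ : ∀ f : Hs, P₁ f - f ∈ tildeΩ)
    (hP₂ : ∀ f : Hs, P₂ f - f ∈ tildeΩ)
    (hP₁s : ∀ f : Hs, P₁s f - f ∈ tildeΩ)
    (hP₂s : ∀ f : Hs, P₂s f - f ∈ tildeΩ)
    (hsol₁ : ∀ f : Hs, ∀ v ∈ tildeΩ,
      (inner ℝ (Λ (P₁ f)) (Λ v) : ℝ) + pair (Ψ₁ (P₁ f)) v = 0)
    (hsol₂ : ∀ f : Hs, ∀ v ∈ tildeΩ,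
      (inner ℝ (Λ (P₂ f)) (Λ v) : ℝ) + pair (Ψ₂ (P₂ f)) v = 0)
    (hsol₁s : ∀ f : Hs, ∀ v ∈ tildeΩ,
      (inner ℝ (Λ (P₁s f)) (Λ v) : ℝ) + pair (Ψ₁s (P₁s f)) v = 0)
    (hsol₂s : ∀ f : Hs, ∀ v ∈ tildeΩ,
      (inner ℝ (Λ (P₂s f)) (Λ v) : ℝ) + pair (Ψ₂s (P₂s f)) v = 0) :
    ∀ f g : Hs,
      ((inner ℝ (Λ (P₁ f)) (Λ g) : ℝ) + pair (Ψ₁ (P₁ f)) g)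
          - ((inner ℝ (Λ (P₂ f)) (Λ g) : ℝ) + pair (Ψ₂ (P₂ f)) g)
        = pair ((Ψ₁ - Ψ₂) (P₁ f)) (P₂s g) := by
  intro f g
  have e1 := hsol₁ f _ (hP₂s g)
  have e2 := hsol₂ f _ (hP₂s g)
  have e3 := hsol₂s g _ (hP₂ f)
  have e4 := hsol₂s g _ (hP₁ f)
  simp only [map_sub, inner_sub_right, LinearMap.sub_apply,
    ContinuousLinearMap.sub_apply, hadj₂] at e1 e2 e3 e4 ⊢
  have c1 : (inner ℝ (Λ (P₂ f)) (Λ (P₂s g)) : ℝ) = inner ℝ (Λ (P₂s g)) (Λ (P₂ f)) :=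
    real_inner_comm _ _
  have c2 : (inner ℝ (Λ (P₁ f)) (Λ (P₂s g)) : ℝ) = inner ℝ (Λ (P₂s g)) (Λ (P₁ f)) :=
    real_inner_comm _ _
  linarith
end

section
/- Let Ω ⊂ ℝ^n be bounded open, s ∈ (0,1), and Ψ ∈ B_0(H^s,H^{-s}) with well-posed direct problems for Ψ and Ψ*. Then the DN maps satisfy (Λ_Ψ)* = Λ_{Ψ*}, i.e. ⟨Λ_{Ψ*}[f],[g]⟩ = ⟨Λ_Ψ[g],[f]⟩ for all f, g ∈ H^s(ℝ^n). -/
/-- `(Λ_Ψ)* = Λ_{Ψ*}`, i.e. `⟨Λ_{Ψ*}[f],[g]⟩ = ⟨Λ_Ψ[g],[f]⟩` for all `f, g ∈ Hˢ`. -/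
theorem stmt_10 (n : ℕ) (s : ℝ) (hs : s ∈ Set.Ioo (0:ℝ) 1)
    {Hs L2 Hms : Type*}
    [NormedAddCommGroup Hs] [NormedSpace ℝ Hs]
    [NormedAddCommGroup L2] [InnerProductSpace ℝ L2]
    [NormedAddCommGroup Hms] [NormedSpace ℝ Hms]
    (Ω : Set (EuclideanSpace ℝ (Fin n))) (hΩo : IsOpen Ω) (hΩb : Bornology.IsBounded Ω)
    (Λ : Hs →ₗ[ℝ] L2)
    (pair : Hms →ₗ[ℝ] Hs →ₗ[ℝ] ℝ)
    (tildeΩ : Submodule ℝ Hs)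
    (Ψ Ψstar : Hs →L[ℝ] Hms)
    (hadj : ∀ u v : Hs, pair (Ψstar u) v = pair (Ψ v) u)
    (P Pstar : Hs → Hs)
    (hP : ∀ f : Hs, P f - f ∈ tildeΩ)
    (hPstar : ∀ f : Hs, Pstar f - f ∈ tildeΩ)
    (hsol : ∀ f : Hs, ∀ v ∈ tildeΩ,
      (inner ℝ (Λ (P f)) (Λ v) : ℝ) + pair (Ψ (P f)) v = 0)
    (hsolstar : ∀ f : Hs, ∀ v ∈ tildeΩ,
      (inner ℝ (Λ (Pstar f)) (Λ v) : ℝ) + pair (Ψstar (Pstar f)) v = 0) :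
    ∀ f g : Hs,
      (inner ℝ (Λ (Pstar f)) (Λ g) : ℝ) + pair (Ψstar (Pstar f)) g
        = (inner ℝ (Λ (P g)) (Λ f) : ℝ) + pair (Ψ (P g)) f := by
  intro f g
  have h1 := hsolstar f (P g - g) (hP g)
  have h2 := hsol g (Pstar f - f) (hPstar f)
  have key : (inner ℝ (Λ (Pstar f)) (Λ (P g)) : ℝ) + pair (Ψstar (Pstar f)) (P g)
      = (inner ℝ (Λ (P g)) (Λ (Pstar f)) : ℝ) + pair (Ψ (P g)) (Pstar f) := by
    rw [hadj, real_inner_comm]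
  simp only [map_sub, inner_sub_right] at h1 h2
  linarith
end
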